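/- Let Γ be a finite simplicial graph with vertex set V such that Z = {v ∈ V : st(v) = V} is non-empty, and let A = A(Γ). Suppose π_{a,K} and π_{b,L} are partial conjugations with a ∉ L, b ∈ K, and K ∩ L = ∅. Then L is a connected component of Γ∖st(a) (so π_{a,L} is a partial conjugation), and the automorphisms π_{a,K}π_{a,L} and π_{b,L} commute in Aut(A). -/

import Mathlib

open SimpleGraph

/-- The star of a vertex: the vertex together with its neighbours. -/
def Gstar {V : Type} (Γ : SimpleGraph V) (a : V) : Set V := insert a (Γ.neighborSet a)

/-- The set of vertices whose star is the whole vertex set. -/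
def Zset {V : Type} (Γ : SimpleGraph V) : Set V := {v | Gstar Γ v = Set.univ}

/-- `K` is (the vertex set of) a connected component of the full subgraph of `Γ`
induced on the vertex set `S`. -/
def IsCompOf {V : Type} (Γ : SimpleGraph V) (S K : Set V) : Prop :=
  ∃ c : (Γ.induce S).ConnectedComponent, K = Subtype.val '' c.supp

/-- The defining relators of the right-angled Artin group of `Γ`. -/
def raagRels {V : Type} (Γ : SimpleGraph V) : Set (FreeGroup V) :=
  {r | ∃ a b : V, Γ.Adj a b ∧
    r = FreeGroup.of a * FreeGroup.of b * (FreeGroup.of a)⁻¹ * (FreeGroup.of b)⁻¹}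

/-- The right-angled Artin group `A(Γ)`. -/
abbrev RAAG {V : Type} (Γ : SimpleGraph V) : Type := PresentedGroup (raagRels Γ)

/-- The generator of `A(Γ)` corresponding to a vertex `v`. -/
def raagGen {V : Type} (Γ : SimpleGraph V) (v : V) : RAAG Γ := PresentedGroup.of v

/-- The pure symmetric automorphism group: automorphisms sending each standard
generator to a conjugate of itself. -/
def PSA {V : Type} (Γ : SimpleGraph V) : Subgroup (MulAut (RAAG Γ)) where
  carrier := {φ | ∀ v : V, IsConj (raagGen Γ v) (φ (raagGen Γ v))}
  one_mem' := fun v => IsConj.refl _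
  mul_mem' := by
    intro φ ψ hφ hψ v
    have h2 : IsConj (φ (raagGen Γ v)) (φ (ψ (raagGen Γ v))) :=
      φ.toMonoidHom.map_isConj (hψ v)
    simpa [MulAut.mul_apply] using (hφ v).trans h2
  inv_mem' := by
    intro φ hφ v
    have h := (φ⁻¹ : MulAut (RAAG _)).toMonoidHom.map_isConj (hφ v)
    simp only [MulEquiv.toMonoidHom_eq_coe, MonoidHom.coe_coe, MulAut.inv_def,
      MulEquiv.symm_apply_apply] at h
    exact h.symm

/-- `φ` is the partial conjugation `π_{a,K}`. -/
def IsPartialConj {V : Type} (Γ : SimpleGraph V) (a : V) (K : Set V)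
    (φ : MulAut (RAAG Γ)) : Prop :=
  IsCompOf Γ (Gstar Γ a)ᶜ K ∧
  (∀ v ∈ K, φ (raagGen Γ v) = (raagGen Γ a)⁻¹ * raagGen Γ v * raagGen Γ a) ∧
  (∀ v ∉ K, φ (raagGen Γ v) = raagGen Γ v)

/-- Combinatorial data (acting letter, domain) of the partial conjugations. -/
def PCSet {V : Type} (Γ : SimpleGraph V) : Set (V × Set V) :=
  {p | IsCompOf Γ (Gstar Γ p.1)ᶜ p.2}

/-- A non-trivial admissible partition (for p-sets). -/
def IsAdmissiblePartition {V : Type} (Q₁ Q₂ : Set (V × Set V)) : Prop :=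
  Disjoint Q₁ Q₂ ∧ Q₁.Nonempty ∧ Q₂.Nonempty ∧
    ∀ p ∈ Q₁, ∀ q ∈ Q₂, p.1 ∈ q.2 ∧ q.1 ∈ p.2

/-- A p-set of partial conjugations. -/
def IsPSet {V : Type} (Γ : SimpleGraph V) (Q : Set (V × Set V)) : Prop :=
  Q ⊆ PCSet Γ ∧
  (∀ a : V, {p ∈ Q | p.1 = a}.Subsingleton) ∧
  ∃ Q₁ Q₂ : Set (V × Set V), Q₁ ∪ Q₂ = Q ∧ IsAdmissiblePartition Q₁ Q₂

/-- A non-trivial admissible partition (for δ-p-sets). -/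
def IsDeltaAdmissiblePartition {V : Type} (Q₁ Q₂ : Set (V × Set V)) : Prop :=
  Disjoint Q₁ Q₂ ∧ Q₁.Nonempty ∧ Q₂.Nonempty ∧
    ∀ p ∈ Q₁, ∀ q ∈ Q₂, p.1 ∈ q.2 ∨ q.1 ∈ p.2 ∨ p.2 = q.2

/-- A δ-p-set of partial conjugations. -/
def IsDeltaPSet {V : Type} (Γ : SimpleGraph V) (Q : Set (V × Set V)) : Prop :=
  Q ⊆ PCSet Γ ∧
  (∀ a : V, a ∉ Zset Γ →
    ({p ∈ Q | p.1 = a}.ncard = 0 ∨ {p ∈ Q | p.1 = a}.ncard = 2)) ∧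
  ∃ Q₁ Q₂ : Set (V × Set V), Q₁ ∪ Q₂ = Q ∧ IsDeltaAdmissiblePartition Q₁ Q₂

/-- `Γ` has a separating intersection of links. -/
def HasSIL {V : Type} (Γ : SimpleGraph V) : Prop :=
  ∃ a b : V, a ≠ b ∧ ¬Γ.Adj a b ∧
    ∃ M : Set V, IsCompOf Γ (Γ.neighborSet a ∩ Γ.neighborSet b)ᶜ M ∧ a ∉ M ∧ b ∉ M

/-- The full subgraph spanned by `U` is dominating. -/
def Dominating {V : Type} (Γ : SimpleGraph V) (U : Set V) : Prop :=
  ∀ v : V, v ∈ U ∨ ∃ u ∈ U, Γ.Adj v u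

/-- The full subgraph spanned by `U` is disconnected or non-dominating. -/
def Missing {V : Type} (Γ : SimpleGraph V) (U : Set V) : Prop :=
  ¬(Γ.induce U).Connected ∨ ¬Dominating Γ U

section Aux

open SimpleGraph

variable {V : Type} {Γ : SimpleGraph V}

lemma mem_gstar_compl {a v : V} : v ∈ (Gstar Γ a)ᶜ ↔ v ≠ a ∧ ¬Γ.Adj a v := by
  simp [Gstar, not_or]

lemma comp_subset {S K : Set V} (h : IsCompOf Γ S K) : K ⊆ S := by
  obtain ⟨c, rfl⟩ := h
  rintro v ⟨w, _, rfl⟩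
  exact w.2

lemma comp_nonempty {S K : Set V} (h : IsCompOf Γ S K) : K.Nonempty := by
  obtain ⟨c, rfl⟩ := h
  obtain ⟨w, hw⟩ := c.exists_rep
  exact ⟨w.1, w, by rw [ConnectedComponent.mem_supp_iff]; exact hw, rfl⟩

lemma mem_comp_of_mem {S K : Set V} {c : (Γ.induce S).ConnectedComponent}
    (hK : K = Subtype.val '' c.supp) {v : V} (hv : v ∈ K) (hvS : v ∈ S) :
    (Γ.induce S).connectedComponentMk ⟨v, hvS⟩ = c := by
  subst hK
  obtain ⟨w, hw, hwv⟩ := hv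
  rw [ConnectedComponent.mem_supp_iff] at hw
  have hw2 : (⟨v, hvS⟩ : {x // x ∈ S}) = w := Subtype.ext hwv.symm
  rw [hw2]
  exact hw

lemma comp_closure {S K : Set V} (h : IsCompOf Γ S K) {u v : V}
    (hu : u ∈ K) (hv : v ∈ S) (huv : Γ.Adj u v) : v ∈ K := by
  obtain ⟨c, hc⟩ := h
  have huS : u ∈ S := comp_subset ⟨c, hc⟩ hu
  have hmk : (Γ.induce S).connectedComponentMk ⟨u, huS⟩ = c := mem_comp_of_mem hc hu huS
  have hadj : (Γ.induce S).Adj ⟨v, hv⟩ ⟨u, huS⟩ := huv.symm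
  have hmk2 : (Γ.induce S).connectedComponentMk ⟨v, hv⟩ = c := by
    rw [← hmk]
    exact ConnectedComponent.sound hadj.reachable
  rw [hc]
  exact ⟨⟨v, hv⟩, by rw [ConnectedComponent.mem_supp_iff]; exact hmk2, rfl⟩

lemma walk_prop {W : Type} {G : SimpleGraph W} {P : W → Prop}
    (h : ∀ u v, G.Adj u v → P u → P v) :
    ∀ {x y : W} (p : G.Walk x y), P x → ∀ w ∈ p.support, P w := by
  intro x y p
  induction p with
  | nil =>
    intro hx w hw
    rw [SimpleGraph.Walk.support_nil, List.mem_singleton] at hw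
    rwa [hw]
  | cons hadj p ih =>
    intro hx w hw
    rw [SimpleGraph.Walk.support_cons, List.mem_cons] at hw
    rcases hw with rfl | hw
    · exact hx
    · exact ih (h _ _ hadj hx) w hw

lemma reach_transfer {S T : Set V} :
    ∀ {x y : {v // v ∈ S}} (p : (Γ.induce S).Walk x y), (∀ w ∈ p.support, ↑w ∈ T) →
      ∀ (hx : ↑x ∈ T) (hy : ↑y ∈ T), (Γ.induce T).Reachable ⟨x, hx⟩ ⟨y, hy⟩ := by
  intro x y p
  induction p with
  | nil => intro _ hx hy; exact Reachable.refl _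
  | @cons u w y hadj p ih =>
    intro hsup hx hy
    have hw : ↑w ∈ T := hsup w (by simp [SimpleGraph.Walk.support_cons])
    have hadj' : (Γ.induce T).Adj ⟨u, hx⟩ ⟨w, hw⟩ := hadj
    exact hadj'.reachable.trans
      (ih (fun z hz => hsup z (by rw [SimpleGraph.Walk.support_cons]; exact List.mem_cons_of_mem _ hz)) hw hy)

/-- The heart of the graph-theoretic part: `L` is a component of `Γ∖st(a)`. -/
lemma target_comp {a b : V} {K L : Set V}
    (hK : IsCompOf Γ (Gstar Γ a)ᶜ K) (hL : IsCompOf Γ (Gstar Γ b)ᶜ L)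
    (haL : a ∉ L) (hbK : b ∈ K) (hKL : K ∩ L = ∅) :
    IsCompOf Γ (Gstar Γ a)ᶜ L := by
  have hKa : K ⊆ (Gstar Γ a)ᶜ := comp_subset hK
  have hLb : L ⊆ (Gstar Γ b)ᶜ := comp_subset hL
  have hba : b ∈ (Gstar Γ a)ᶜ := hKa hbK
  have hab : a ∈ (Gstar Γ b)ᶜ := by
    rw [mem_gstar_compl] at hba ⊢
    exact ⟨fun h => hba.1 h.symm, fun h => hba.2 h.symm⟩
  have hdisj : ∀ v ∈ K, v ∉ L := fun v hvK hvL =>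
    Set.eq_empty_iff_forall_notMem.mp hKL v ⟨hvK, hvL⟩
  -- L ⊆ (Gstar a)ᶜ
  have hLa : L ⊆ (Gstar Γ a)ᶜ := by
    intro v hv
    rw [mem_gstar_compl]
    refine ⟨fun h => haL (h ▸ hv), fun h => ?_⟩
    exact haL (comp_closure hL hv hab h.symm)
  -- closure of L inside (Gstar a)ᶜ
  have hclose : ∀ u ∈ L, ∀ w, w ∈ (Gstar Γ a)ᶜ → Γ.Adj u w → w ∈ L := by
    intro u hu w hwa huw
    by_cases hwb : w ∈ (Gstar Γ b)ᶜ
    · exact comp_closure hL hu hwb huw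
    · exfalso
      rw [mem_gstar_compl, not_and_or, not_not, not_not] at hwb
      rcases hwb with hwb | hwb
      · subst hwb
        exact hdisj u (comp_closure hK hbK (hLa hu) huw.symm) hu
      · have hwK : w ∈ K := comp_closure hK hbK hwa hwb
        exact hdisj u (comp_closure hK hwK (hLa hu) huw.symm) hu
  -- finish
  obtain ⟨v₀, hv₀⟩ := comp_nonempty hL
  obtain ⟨d, hd⟩ := hL
  have hL' : IsCompOf Γ (Gstar Γ b)ᶜ L := ⟨d, hd⟩
  refine ⟨(Γ.induce (Gstar Γ a)ᶜ).connectedComponentMk ⟨v₀, hLa hv₀⟩, ?_⟩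
  ext v
  constructor
  · -- v ∈ L → v ∈ image of supp
    intro hv
    have h0 : (Γ.induce (Gstar Γ b)ᶜ).connectedComponentMk ⟨v₀, hLb hv₀⟩ = d :=
      mem_comp_of_mem hd hv₀ (hLb hv₀)
    have h1 : (Γ.induce (Gstar Γ b)ᶜ).connectedComponentMk ⟨v, hLb hv⟩ = d :=
      mem_comp_of_mem hd hv (hLb hv)
    have hreach : (Γ.induce (Gstar Γ b)ᶜ).Reachable ⟨v₀, hLb hv₀⟩ ⟨v, hLb hv⟩ :=
      SimpleGraph.ConnectedComponent.exact (h0.trans h1.symm)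
    obtain ⟨p⟩ := hreach
    -- all support vertices of p lie in L
    have hsup : ∀ w ∈ p.support, (↑w : V) ∈ L := by
      refine walk_prop (P := fun w : {x // x ∈ (Gstar Γ b)ᶜ} => (↑w : V) ∈ L) ?_ p hv₀
      intro x y hadj hx
      exact comp_closure hL' hx y.2 hadj
    have hreach' := reach_transfer p (fun w hw => hLa (hsup w hw)) (hLa hv₀) (hLa hv)
    refine ⟨⟨v, hLa hv⟩, ?_, rfl⟩
    rw [ConnectedComponent.mem_supp_iff]
    exact (ConnectedComponent.sound hreach').symm
  · rintro ⟨w, hw, rfl⟩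
    rw [ConnectedComponent.mem_supp_iff] at hw
    have hreach : (Γ.induce (Gstar Γ a)ᶜ).Reachable ⟨v₀, hLa hv₀⟩ w :=
      SimpleGraph.ConnectedComponent.exact (hw.symm)
    obtain ⟨p⟩ := hreach
    refine walk_prop (P := fun w : {x // x ∈ (Gstar Γ a)ᶜ} => (↑w : V) ∈ L) ?_ p hv₀ w
      (SimpleGraph.Walk.end_mem_support p)
    intro x y hadj hx
    exact hclose x hx y y.2 hadj

lemma adj_of_comp {a : V} {L : Set V} (hL : IsCompOf Γ (Gstar Γ a)ᶜ L)
    {x y : V} (hx : x ∈ L) (hxy : Γ.Adj x y) (hy : y ∉ L) : Γ.Adj a y := by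
  by_cases h : y ∈ (Gstar Γ a)ᶜ
  · exact absurd (comp_closure hL hx h hxy) hy
  · rw [mem_gstar_compl, not_and_or, not_not, not_not] at h
    rcases h with h | h
    · subst h
      exact absurd hxy.symm (mem_gstar_compl.mp (comp_subset hL hx)).2
    · exact h

lemma raag_commute_of_adj {x y : V} (h : Γ.Adj x y) :
    Commute (raagGen Γ x) (raagGen Γ y) := by
  have hmem : (FreeGroup.of x * FreeGroup.of y * (FreeGroup.of x)⁻¹ * (FreeGroup.of y)⁻¹ :
      FreeGroup V) ∈ Subgroup.normalClosure (raagRels Γ) :=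
    Subgroup.subset_normalClosure ⟨x, y, h, rfl⟩
  have h1 : raagGen Γ x * raagGen Γ y * (raagGen Γ x)⁻¹ * (raagGen Γ y)⁻¹ = 1 := by
    have h2 := (QuotientGroup.eq_one_iff (N := Subgroup.normalClosure (raagRels Γ))
      (FreeGroup.of x * FreeGroup.of y * (FreeGroup.of x)⁻¹ * (FreeGroup.of y)⁻¹)).mpr hmem
    have h3 : PresentedGroup.mk (raagRels Γ)
        (FreeGroup.of x * FreeGroup.of y * (FreeGroup.of x)⁻¹ * (FreeGroup.of y)⁻¹) = 1 := h2
    simp only [map_mul, map_inv] at h3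
    exact h3
  show raagGen Γ x * raagGen Γ y = raagGen Γ y * raagGen Γ x
  calc raagGen Γ x * raagGen Γ y
      = (raagGen Γ x * raagGen Γ y * (raagGen Γ x)⁻¹ * (raagGen Γ y)⁻¹) *
        (raagGen Γ y * raagGen Γ x) := by group
    _ = raagGen Γ y * raagGen Γ x := by rw [h1]; group

open Classical in
/-- Relator condition for the partial-conjugation map. -/
lemma pc_rels {a : V} {L : Set V} (hL : IsCompOf Γ (Gstar Γ a)ᶜ L) (c : RAAG Γ)
    (hc : ∀ y, Γ.Adj a y → Commute c (raagGen Γ y)) :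
    ∀ r ∈ raagRels Γ, FreeGroup.lift
      (fun v => if v ∈ L then c⁻¹ * raagGen Γ v * c else raagGen Γ v) r = 1 := by
  rintro r ⟨x, y, hxy, rfl⟩
  have h0 : Commute (raagGen Γ x) (raagGen Γ y) := raag_commute_of_adj hxy
  simp only [map_mul, map_inv, FreeGroup.lift_apply_of]
  by_cases hx : x ∈ L
  · by_cases hy : y ∈ L
    · rw [if_pos hx, if_pos hy]
      have hcom : Commute (c⁻¹ * raagGen Γ x * c) (c⁻¹ * raagGen Γ y * c) := by
        show (c⁻¹ * raagGen Γ x * c) * (c⁻¹ * raagGen Γ y * c)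
          = (c⁻¹ * raagGen Γ y * c) * (c⁻¹ * raagGen Γ x * c)
        calc (c⁻¹ * raagGen Γ x * c) * (c⁻¹ * raagGen Γ y * c)
            = c⁻¹ * (raagGen Γ x * raagGen Γ y) * c := by group
          _ = c⁻¹ * (raagGen Γ y * raagGen Γ x) * c := by rw [h0.eq]
          _ = (c⁻¹ * raagGen Γ y * c) * (c⁻¹ * raagGen Γ x * c) := by group
      rw [hcom.eq]; group
    · rw [if_pos hx, if_neg hy]
      have hcy : Commute c (raagGen Γ y) := hc y (adj_of_comp hL hx hxy hy)
      have hcom : Commute (c⁻¹ * raagGen Γ x * c) (raagGen Γ y) :=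
        (hcy.inv_left.mul_left h0).mul_left hcy
      rw [hcom.eq]; group
  · by_cases hy : y ∈ L
    · rw [if_neg hx, if_pos hy]
      have hcx : Commute c (raagGen Γ x) := hc x (adj_of_comp hL hy hxy.symm hx)
      have hcom : Commute (raagGen Γ x) (c⁻¹ * raagGen Γ y * c) :=
        ((hcx.inv_left.mul_left h0.symm).mul_left hcx).symm
      rw [hcom.eq]; group
    · rw [if_neg hx, if_neg hy]
      rw [h0.eq]; group

lemma exists_pc {a : V} {L : Set V} (hL : IsCompOf Γ (Gstar Γ a)ᶜ L) (haL : a ∉ L) :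
    ∃ φ' : MulAut (RAAG Γ), IsPartialConj Γ a L φ' := by
  classical
  have hca : ∀ y, Γ.Adj a y → Commute (raagGen Γ a) (raagGen Γ y) :=
    fun y hy => raag_commute_of_adj hy
  have hcai : ∀ y, Γ.Adj a y → Commute ((raagGen Γ a)⁻¹) (raagGen Γ y) :=
    fun y hy => (hca y hy).inv_left
  set F : RAAG Γ →* RAAG Γ := PresentedGroup.toGroup (pc_rels hL (raagGen Γ a) hca) with hFdef
  set G : RAAG Γ →* RAAG Γ := PresentedGroup.toGroup (pc_rels hL ((raagGen Γ a)⁻¹) hcai) with hGdef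
  have hFof : ∀ v, F (raagGen Γ v) =
      if v ∈ L then (raagGen Γ a)⁻¹ * raagGen Γ v * raagGen Γ a else raagGen Γ v :=
    fun v => PresentedGroup.toGroup.of _
  have hGof : ∀ v, G (raagGen Γ v) =
      if v ∈ L then ((raagGen Γ a)⁻¹)⁻¹ * raagGen Γ v * (raagGen Γ a)⁻¹ else raagGen Γ v :=
    fun v => PresentedGroup.toGroup.of _
  have hF1 : ∀ v ∈ L, F (raagGen Γ v) = (raagGen Γ a)⁻¹ * raagGen Γ v * raagGen Γ a :=
    fun v hv => by rw [hFof v, if_pos hv]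
  have hF0 : ∀ v ∉ L, F (raagGen Γ v) = raagGen Γ v :=
    fun v hv => by rw [hFof v, if_neg hv]
  have hG1 : ∀ v ∈ L, G (raagGen Γ v) = ((raagGen Γ a)⁻¹)⁻¹ * raagGen Γ v * (raagGen Γ a)⁻¹ :=
    fun v hv => by rw [hGof v, if_pos hv]
  have hG0 : ∀ v ∉ L, G (raagGen Γ v) = raagGen Γ v :=
    fun v hv => by rw [hGof v, if_neg hv]
  have hGF : G.comp F = MonoidHom.id _ := by
    refine PresentedGroup.ext fun x => ?_
    show G (F (raagGen Γ x)) = raagGen Γ x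
    by_cases hx : x ∈ L
    · rw [hF1 x hx, map_mul, map_mul, map_inv, hG1 x hx, hG0 a haL]
      group
    · rw [hF0 x hx, hG0 x hx]
  have hFG : F.comp G = MonoidHom.id _ := by
    refine PresentedGroup.ext fun x => ?_
    show F (G (raagGen Γ x)) = raagGen Γ x
    by_cases hx : x ∈ L
    · rw [hG1 x hx, map_mul, map_mul, map_inv, map_inv, hF1 x hx, hF0 a haL]
      group
    · rw [hG0 x hx, hF0 x hx]
  refine ⟨MonoidHom.toMulEquiv F G hGF hFG, hL, ?_, ?_⟩
  · intro v hv
    show F (raagGen Γ v) = _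
    exact hF1 v hv
  · intro v hv
    show F (raagGen Γ v) = _
    exact hF0 v hv

lemma aut_ext {φ ψ : MulAut (RAAG Γ)} (h : ∀ v, φ (raagGen Γ v) = ψ (raagGen Γ v)) :
    φ = ψ := by
  have h2 : (φ : RAAG Γ →* RAAG Γ) = (ψ : RAAG Γ →* RAAG Γ) := PresentedGroup.ext h
  exact MulEquiv.ext fun x => DFunLike.congr_fun h2 x

end Aux

/-- Lemma 3.4. If `π_{a,K}`, `π_{b,L}` are partial conjugations with
`a ∉ L`, `b ∈ K`, `K ∩ L = ∅`, then `L` is also a connected component of `Γ∖st(a)`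
(so `π_{a,L}` is a partial conjugation), and `π_{a,K}π_{a,L}` commutes with `π_{b,L}`. -/
theorem new_pc_and_commute {V : Type} [Fintype V] (Γ : SimpleGraph V)
    (hZ : (Zset Γ).Nonempty) (a b : V) (K L : Set V) (φ ψ : MulAut (RAAG Γ))
    (hφ : IsPartialConj Γ a K φ) (hψ : IsPartialConj Γ b L ψ)
    (haL : a ∉ L) (hbK : b ∈ K) (hKL : K ∩ L = ∅) :
    IsCompOf Γ (Gstar Γ a)ᶜ L ∧
      ∃ φ' : MulAut (RAAG Γ), IsPartialConj Γ a L φ' ∧ Commute (φ * φ') ψ := by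
  obtain ⟨hKc, hφK, hφn⟩ := hφ
  obtain ⟨hLc, hψL, hψn⟩ := hψ
  have hLa : IsCompOf Γ (Gstar Γ a)ᶜ L := target_comp hKc hLc haL hbK hKL
  refine ⟨hLa, ?_⟩
  obtain ⟨φ', hφ'c⟩ := exists_pc hLa haL
  obtain ⟨_, hφ'L, hφ'n⟩ := hφ'c
  refine ⟨φ', ⟨hLa, hφ'L, hφ'n⟩, ?_⟩
  have haK : a ∉ K := fun h => (mem_gstar_compl.mp (comp_subset hKc h)).1 rfl
  have hbL : b ∉ L := fun h => (mem_gstar_compl.mp (comp_subset hLc h)).1 rfl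
  have hdisj : ∀ v ∈ K, v ∉ L := fun v hvK hvL =>
    Set.eq_empty_iff_forall_notMem.mp hKL v ⟨hvK, hvL⟩
  show (φ * φ') * ψ = ψ * (φ * φ')
  apply aut_ext
  intro v
  simp only [MulAut.mul_apply]
  by_cases hvL : v ∈ L
  · have hvK : v ∉ K := fun h => hdisj v h hvL
    rw [hψL v hvL]
    simp only [map_mul, map_inv]
    rw [hφ'n b hbL, hφ'L v hvL]
    simp only [map_mul, map_inv]
    rw [hφK b hbK, hφn a haK, hφn v hvK]
    rw [hψn a haL, hψL v hvL]
    group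
  · by_cases hvK : v ∈ K
    · rw [hψn v hvL, hφ'n v hvL, hφK v hvK]
      simp only [map_mul, map_inv]
      rw [hψn a haL, hψn v hvL]
    · rw [hψn v hvL, hφ'n v hvL, hφn v hvK, hψn v hvL]
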